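/- Let X be a real Hilbert space, g : X → X a κ-contraction with 0 ≤ κ < 1, and x_{j−2}, x_{j−1} ∈ X. Set w_{j−1} := g(x_{j−2}) − x_{j−2}, w_j := g(x_{j−1}) − x_{j−1} and e_{j−1} := x_{j−1} − x_{j−2}, and assume w_j ≠ w_{j−1}. If η ∈ ℝ minimizes the function η ↦ ‖w_{j−1} + η(w_j − w_{j−1})‖ over ℝ, then |η| · ‖e_{j−1}‖ ≤ (1 − κ)^{−1} ‖w_{j−1}‖. (This is the bound |α^j_{j−1}|‖e_{j−1}‖ ≤ (1−κ)^{−1}‖w_{j−1}‖ for the depth m = 1 Anderson optimization problem, whose constrained form minimizes ‖α_{j−2} w_{j−1} + α_{j−1} w_j‖ over α_{j−2} + α_{j−1} = 1 with α_{j−1} = η.) -/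

import Mathlib

/-- depth `m = 1` Anderson bound `|η| ‖e_{j-1}‖ ≤ (1-κ)⁻¹ ‖w_{j-1}‖`,
where `η` minimizes `η ↦ ‖w_{j-1} + η (w_j - w_{j-1})‖` over `ℝ`. -/
theorem stmt_2 {X : Type*} [NormedAddCommGroup X] [InnerProductSpace ℝ X] [CompleteSpace X]
    (g : X → X) (κ : ℝ) (hκ0 : 0 ≤ κ) (hκ1 : κ < 1)
    (hg : ∀ x y : X, ‖g y - g x‖ ≤ κ * ‖x - y‖)
    (xjm2 xjm1 : X)
    (wjm1 wj : X) (hwjm1 : wjm1 = g xjm2 - xjm2) (hwj : wj = g xjm1 - xjm1)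
    (hne : wj ≠ wjm1)
    (η : ℝ)
    (hmin : ∀ t : ℝ, ‖wjm1 + η • (wj - wjm1)‖ ≤ ‖wjm1 + t • (wj - wjm1)‖) :
    |η| * ‖xjm1 - xjm2‖ ≤ (1 - κ)⁻¹ * ‖wjm1‖ := by
  set d := wj - wjm1 with hd
  have hdne : d ≠ 0 := sub_ne_zero.mpr hne
  have hdpos : (0:ℝ) < ‖d‖ := norm_pos_iff.mpr hdne
  set b : ℝ := inner ℝ wjm1 d with hb
  set a : ℝ := ‖d‖ ^ 2 with ha
  have hapos : (0:ℝ) < a := by positivity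
  have hq : ∀ t : ℝ, ‖wjm1 + t • d‖ ^ 2 = ‖wjm1‖ ^ 2 + 2 * t * b + t ^ 2 * a := by
    intro t
    rw [norm_add_sq_real, real_inner_smul_right, norm_smul]
    simp [ha, mul_pow]
    ring
  have key : ∀ t : ℝ, ‖wjm1‖ ^ 2 + 2 * η * b + η ^ 2 * a ≤
      ‖wjm1‖ ^ 2 + 2 * t * b + t ^ 2 * a := by
    intro t
    rw [← hq, ← hq]
    exact pow_le_pow_left₀ (norm_nonneg _) (hmin t) 2
  have hηeq : η = -b / a := by
    have h := key (-b / a)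
    have e1 : a * (η + b / a) ^ 2 = (2 * η * b + η ^ 2 * a) + b ^ 2 / a := by
      field_simp; ring
    have e2 : 2 * (-b / a) * b + (-b / a) ^ 2 * a = -(b ^ 2 / a) := by
      field_simp; ring
    have h5 : a * (η + b / a) ^ 2 ≤ 0 := by linarith
    have h6 : (η + b / a) ^ 2 ≤ 0 := by nlinarith [sq_nonneg (η + b / a)]
    have h7 : (η + b / a) ^ 2 = 0 := le_antisymm h6 (sq_nonneg _)
    have h8 : η + b / a = 0 := by
      exact pow_eq_zero_iff two_ne_zero |>.mp h7
    rw [neg_div]; linarith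
  have hcs : |b| ≤ ‖wjm1‖ * ‖d‖ := abs_real_inner_le_norm wjm1 d
  have h1 : |η| * ‖d‖ ≤ ‖wjm1‖ := by
    rw [hηeq, abs_div, abs_neg, abs_of_pos hapos]
    rw [div_mul_eq_mul_div, div_le_iff₀ hapos]
    calc |b| * ‖d‖ ≤ (‖wjm1‖ * ‖d‖) * ‖d‖ := by
          exact mul_le_mul_of_nonneg_right hcs (norm_nonneg _)
      _ = ‖wjm1‖ * a := by rw [ha]; ring
  -- (1-κ) ‖e‖ ≤ ‖d‖
  have hgb : ‖g xjm1 - g xjm2‖ ≤ κ * ‖xjm1 - xjm2‖ := by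
    have := hg xjm2 xjm1
    rwa [norm_sub_rev xjm2 xjm1] at this
  have hde : d = (g xjm1 - g xjm2) - (xjm1 - xjm2) := by
    rw [hd, hwj, hwjm1]; abel
  have h2 : ‖xjm1 - xjm2‖ - ‖g xjm1 - g xjm2‖ ≤ ‖d‖ := by
    rw [hde]
    have := norm_sub_norm_le (xjm1 - xjm2) (g xjm1 - g xjm2)
    calc ‖xjm1 - xjm2‖ - ‖g xjm1 - g xjm2‖ ≤ ‖(xjm1 - xjm2) - (g xjm1 - g xjm2)‖ := this
      _ = ‖(g xjm1 - g xjm2) - (xjm1 - xjm2)‖ := norm_sub_rev _ _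
  have h3 : (1 - κ) * ‖xjm1 - xjm2‖ ≤ ‖d‖ := by nlinarith
  have hκpos : (0:ℝ) < 1 - κ := by linarith
  have h4 : |η| * ((1 - κ) * ‖xjm1 - xjm2‖) ≤ ‖wjm1‖ := by
    calc |η| * ((1 - κ) * ‖xjm1 - xjm2‖) ≤ |η| * ‖d‖ :=
          mul_le_mul_of_nonneg_left h3 (abs_nonneg η)
      _ ≤ ‖wjm1‖ := h1
  rw [inv_mul_eq_div, le_div_iff₀ hκpos]
  nlinarith [h4]
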